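/- Consider Bracha-style reliable broadcast over an asymmetric quorum system: suppose in an execution with faulty set F there exists a guild G. If a wise process p_i collects messages from a quorum Q_i ∈ Q_i of processes, then the correct part Q_i \ F is nonempty and, for every wise process p_j, intersects every quorum of p_j; consequently Q_i \ F contains a kernel for p_j. -/

import Mathlib

/-- Downward closure of a collection of process sets. -/
def dc {n : ℕ} (A : Set (Finset (Fin n))) : Set (Finset (Fin n)) :=
  {B | ∃ C ∈ A, B ⊆ C}

/-- Consistency of an asymmetric Byzantine quorum system. -/
def AsymConsistency {n : ℕ} (𝓕 𝓠 : Fin n → Set (Finset (Fin n))) : Prop :=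
  ∀ i j : Fin n, ∀ Qi ∈ 𝓠 i, ∀ Qj ∈ 𝓠 j, ∀ Fij ∈ dc (𝓕 i) ∩ dc (𝓕 j),
    ¬ (Qi ∩ Qj ⊆ Fij)

/-- Availability of an asymmetric Byzantine quorum system. -/
def AsymAvailability {n : ℕ} (𝓕 𝓠 : Fin n → Set (Finset (Fin n))) : Prop :=
  ∀ i : Fin n, ∀ F ∈ 𝓕 i, ∃ Q ∈ 𝓠 i, F ∩ Q = ∅

/-- A process is wise for faulty set F if F is in the downward closure of its fail-prone system. -/
def Wise {n : ℕ} (𝓕 : Fin n → Set (Finset (Fin n))) (F : Finset (Fin n)) (i : Fin n) : Prop :=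
  F ∈ dc (𝓕 i)

/-- A guild for faulty set F: all members are wise, and it contains a quorum for each member. -/
def Guild {n : ℕ} (𝓕 𝓠 : Fin n → Set (Finset (Fin n))) (F : Finset (Fin n))
    (G : Finset (Fin n)) : Prop :=
  (∀ i ∈ G, Wise 𝓕 F i) ∧ (∀ i ∈ G, ∃ Q ∈ 𝓠 i, Q ⊆ G)

/-- In an execution with a guild, the correct part of a wise process'"'"' quorum is nonempty,
intersects every quorum of every wise process, and contains a kernel for it. -/
theorem bracha_kernel {n : ℕ} (𝓕 𝓠 : Fin n → Set (Finset (Fin n)))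
    (hcons : AsymConsistency 𝓕 𝓠) (havail : AsymAvailability 𝓕 𝓠)
    (F G : Finset (Fin n)) (hG : Guild 𝓕 𝓠 F G)
    (i : Fin n) (hi : Wise 𝓕 F i)
    (Qi : Finset (Fin n)) (hQi : Qi ∈ 𝓠 i) :
    (Qi \ F).Nonempty ∧
    ∀ j : Fin n, Wise 𝓕 F j →
      (∀ Qj ∈ 𝓠 j, ((Qi \ F) ∩ Qj).Nonempty) ∧
      ∃ K ⊆ Qi \ F, (∀ Q ∈ 𝓠 j, (K ∩ Q).Nonempty) ∧
        ∀ K' ⊂ K, ∃ Q ∈ 𝓠 j, K' ∩ Q = ∅ := by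
  have hinter : ∀ j : Fin n, Wise 𝓕 F j → ∀ Qj ∈ 𝓠 j, ((Qi \ F) ∩ Qj).Nonempty := by
    intro j hj Qj hQj
    have h := hcons i j Qi hQi Qj hQj F ⟨hi, hj⟩
    rw [Finset.not_subset] at h
    obtain ⟨x, hx, hxF⟩ := h
    simp only [Finset.mem_inter] at hx
    exact ⟨x, Finset.mem_inter.mpr ⟨Finset.mem_sdiff.mpr ⟨hx.1, hxF⟩, hx.2⟩⟩
  constructor
  · obtain ⟨x, hx⟩ := hinter i hi Qi hQi
    simp only [Finset.mem_inter] at hx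
    exact ⟨x, hx.1⟩
  · intro j hj
    refine ⟨hinter j hj, ?_⟩
    set S : Set (Finset (Fin n)) :=
      {K | K ⊆ Qi \ F ∧ ∀ Q ∈ 𝓠 j, (K ∩ Q).Nonempty} with hS
    have hne : (Qi \ F) ∈ S := ⟨le_refl _, hinter j hj⟩
    obtain ⟨K, hK, hmin⟩ := (wellFounded_lt (α := Finset (Fin n))).has_min S ⟨_, hne⟩
    refine ⟨K, hK.1, hK.2, ?_⟩
    intro K' hK'
    by_contra hcon
    push_neg at hcon
    exact hmin K' ⟨hK'.subset.trans hK.1, fun Q hQ =>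
      hcon Q hQ⟩ hK'
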